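/- Let K be a nontrivial commutative ring, Q a quandle, Λ an abelian group written multiplicatively, A = K[Λ] the group algebra of Λ over K, V = Q →₀ A the free A-module on Q with standard basis (e_a)_{a∈Q}, and λ : Q × Q → Λ any map. Let c̃ : V ⊗_A V → V ⊗_A V be the A-linear map determined by c̃(e_a ⊗ e_b) = λ(a,b) · (e_b ⊗ e_{a◃b}). Then c̃ is an A-linear automorphism, and c̃ satisfies the Yang–Baxter equation (c̃ ⊗ id_V) ∘ (id_V ⊗ c̃) ∘ (c̃ ⊗ id_V) = (id_V ⊗ c̃) ∘ (c̃ ⊗ id_V) ∘ (id_V ⊗ c̃) if and only if λ(a,c)·λ(a◃c, b◃c) = λ(a,b)·λ(a◃b, c) for all a, b, c ∈ Q. -/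

import Mathlib

open scoped TensorProduct

/-- A quandle structure, given by operations `op = ◃` and `opInv = ◃⁻¹`. -/
def IsQuandle {Q : Type*} (op opInv : Q → Q → Q) : Prop :=
  (∀ a, op a a = a) ∧
  (∀ a b, opInv (op a b) b = a ∧ op (opInv a b) b = a) ∧
  (∀ a b c, op (op a b) c = op (op a c) (op b c))

/-- The endomorphism `c ⊗ id` of `(V ⊗ V) ⊗ V`. -/
noncomputable def yb12 {R V : Type*} [CommRing R] [AddCommGroup V] [Module R V]
    (c : V ⊗[R] V →ₗ[R] V ⊗[R] V) :
    (V ⊗[R] V) ⊗[R] V →ₗ[R] (V ⊗[R] V) ⊗[R] V :=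
  LinearMap.rTensor V c

/-- The endomorphism `id ⊗ c` of `(V ⊗ V) ⊗ V`, transported along the associator. -/
noncomputable def yb23 {R V : Type*} [CommRing R] [AddCommGroup V] [Module R V]
    (c : V ⊗[R] V →ₗ[R] V ⊗[R] V) :
    (V ⊗[R] V) ⊗[R] V →ₗ[R] (V ⊗[R] V) ⊗[R] V :=
  (TensorProduct.assoc R V V V).symm.toLinearMap ∘ₗ
    LinearMap.lTensor V c ∘ₗ (TensorProduct.assoc R V V V).toLinearMap

/-- Let `K` be a nontrivial commutative ring, `Q` a quandle, `Λ` an abelian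
group, `A = K[Λ]` the group algebra, `V = Q →₀ A` the free `A`-module on `Q`, and
`λ : Q × Q → Λ` any map.  The `A`-linear map `c̃` determined by
`c̃(e_a ⊗ e_b) = λ(a,b) · (e_b ⊗ e_{a◃b})` is an `A`-linear automorphism, and it satisfies
the Yang–Baxter equation iff `λ(a,c)·λ(a◃c, b◃c) = λ(a,b)·λ(a◃b, c)` for all `a, b, c`. -/
theorem stmt_7 {K Λ Q : Type*} [CommRing K] [Nontrivial K] [CommGroup Λ]
    (op opInv : Q → Q → Q) (hq : IsQuandle op opInv)
    (lam : Q → Q → Λ)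
    (ct : (Q →₀ MonoidAlgebra K Λ) ⊗[MonoidAlgebra K Λ] (Q →₀ MonoidAlgebra K Λ)
      →ₗ[MonoidAlgebra K Λ]
      (Q →₀ MonoidAlgebra K Λ) ⊗[MonoidAlgebra K Λ] (Q →₀ MonoidAlgebra K Λ))
    (hct : ∀ a b : Q,
      ct (Finsupp.single a (1 : MonoidAlgebra K Λ)
            ⊗ₜ[MonoidAlgebra K Λ] Finsupp.single b (1 : MonoidAlgebra K Λ)) =
        MonoidAlgebra.of K Λ (lam a b) •
          (Finsupp.single b (1 : MonoidAlgebra K Λ)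
            ⊗ₜ[MonoidAlgebra K Λ] Finsupp.single (op a b) (1 : MonoidAlgebra K Λ))) :
    Function.Bijective ct ∧
    (yb12 ct ∘ₗ yb23 ct ∘ₗ yb12 ct = yb23 ct ∘ₗ yb12 ct ∘ₗ yb23 ct ↔
      ∀ a b c : Q, lam a c * lam (op a c) (op b c) = lam a b * lam (op a b) c) := by
  classical
  set A := MonoidAlgebra K Λ with hA
  set V := Q →₀ A with hV
  let bV : Module.Basis Q A V := Finsupp.basisSingleOne
  let bVV : Module.Basis (Q × Q) A (V ⊗[A] V) := bV.tensorProduct bV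
  have hbVV : ∀ p : Q × Q, bVV p =
      Finsupp.single p.1 (1 : A) ⊗ₜ[A] Finsupp.single p.2 (1 : A) := by
    intro p
    simp only [bVV, bV, Module.Basis.tensorProduct_apply']
    rfl
  let bVVV : Module.Basis ((Q × Q) × Q) A ((V ⊗[A] V) ⊗[A] V) := bVV.tensorProduct bV
  have hbVVV : ∀ p : (Q × Q) × Q,
      bVVV p = bVV p.1 ⊗ₜ[A] Finsupp.single p.2 (1 : A) := by
    intro p
    simp only [bVVV, bV, Module.Basis.tensorProduct_apply']
    rfl
  have hctb : ∀ a b : Q, ct (bVV (a, b)) =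
      MonoidAlgebra.of K Λ (lam a b) • bVV (b, op a b) := by
    intro a b; rw [hbVV, hbVV]; exact hct a b
  -- Bijectivity
  have hbij : Function.Bijective ct := by
    let d : V ⊗[A] V →ₗ[A] V ⊗[A] V :=
      bVV.constr A fun p =>
        (MonoidAlgebra.of K Λ (lam (opInv p.2 p.1) p.1)⁻¹) • bVV (opInv p.2 p.1, p.1)
    have hdc : ∀ x, d (ct x) = x := by
      have h : d ∘ₗ ct = LinearMap.id := by
        apply bVV.ext
        rintro ⟨a, b⟩
        rw [LinearMap.comp_apply, hctb, map_smul, Module.Basis.constr_basis]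
        simp only
        rw [(hq.2.1 a b).1, smul_smul, ← map_mul, mul_inv_cancel, map_one, one_smul,
          LinearMap.id_apply]
      intro x; exact DFunLike.congr_fun h x
    have hcd : ∀ x, ct (d x) = x := by
      have h : ct ∘ₗ d = LinearMap.id := by
        apply bVV.ext
        rintro ⟨b, c⟩
        rw [LinearMap.comp_apply, Module.Basis.constr_basis, map_smul]
        simp only
        rw [hctb, (hq.2.1 c b).2, smul_smul, ← map_mul, inv_mul_cancel, map_one, one_smul,
          LinearMap.id_apply]
      intro x; exact DFunLike.congr_fun h x
    exact ⟨Function.LeftInverse.injective hdc, Function.RightInverse.surjective hcd⟩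
  refine ⟨hbij, ?_⟩
  -- computations
  have H12 : ∀ a b c : Q, yb12 ct (bVVV ((a, b), c)) =
      MonoidAlgebra.of K Λ (lam a b) • bVVV ((b, op a b), c) := by
    intro a b c
    rw [hbVVV, hbVVV]
    simp only [yb12, A, V, LinearMap.rTensor_tmul, hctb, TensorProduct.smul_tmul']
  have H23 : ∀ a b c : Q, yb23 ct (bVVV ((a, b), c)) =
      MonoidAlgebra.of K Λ (lam b c) • bVVV ((a, c), op b c) := by
    intro a b c
    rw [hbVVV, hbVVV, hbVV, hbVV]
    simp only [yb23, A, V, LinearMap.comp_apply, LinearEquiv.coe_coe,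
      TensorProduct.assoc_tmul, LinearMap.lTensor_tmul, hct,
      TensorProduct.tmul_smul, map_smul, TensorProduct.assoc_symm_tmul]
  have hcanc : ∀ (s t : A) (p : (Q × Q) × Q), s • bVVV p = t • bVVV p → s = t := by
    intro s t p hst
    have h2 := congrArg (fun v => bVVV.repr v p) hst
    simp only [LinearEquiv.map_smul, Module.Basis.repr_self, Finsupp.smul_single, smul_eq_mul,
      mul_one, Finsupp.single_eq_same] at h2
    exact h2
  constructor
  · intro h a b c
    have h1 := DFunLike.congr_fun h (bVVV ((a, b), c))
    simp only [LinearMap.comp_apply, H12, H23, map_smul, smul_smul, ← map_mul] at h1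
    rw [← hq.2.2 a b c] at h1
    have h2 := hcanc _ _ _ h1
    have h3 := MonoidAlgebra.of_injective h2
    have h4 : lam b c * (lam a c * lam (op a c) (op b c)) =
        lam b c * (lam a b * lam (op a b) c) := by
      calc lam b c * (lam a c * lam (op a c) (op b c))
          = lam b c * lam a c * lam (op a c) (op b c) := by rw [mul_assoc]
        _ = lam a b * lam (op a b) c * lam b c := h3.symm
        _ = lam b c * (lam a b * lam (op a b) c) := mul_comm _ _
    exact mul_left_cancel h4
  · intro h
    apply bVVV.ext
    rintro ⟨⟨a, b⟩, c⟩
    simp only [LinearMap.comp_apply, H12, H23, map_smul, smul_smul, ← map_mul]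
    rw [← hq.2.2 a b c]
    congr 2
    calc lam a b * lam (op a b) c * lam b c
        = lam b c * (lam a b * lam (op a b) c) := mul_comm _ _
      _ = lam b c * (lam a c * lam (op a c) (op b c)) := by rw [h a b c]
      _ = lam b c * lam a c * lam (op a c) (op b c) := by rw [mul_assoc]
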